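/- Lemma 2, 'if' direction: in the latent-variable LiNGAM model, if x_j has no child observed variable and no latent confounder, then the residual r_j^{(−j)} of regressing x_j on all other variables x_{(−j)} equals e_j and is independent of x_{(−j)}. -/

import Mathlib

open MeasureTheory ProbabilityTheory Matrix

/-- Lemma 2, 'if' direction: if `x_j` is a sink with no latent confounder, i.e.
`x_j = wᵀ x₋ⱼ + e_j` with `e_j` zero-mean independent of the vector `x₋ⱼ`, and
the covariance matrix of `x₋ⱼ` is invertible, then the population regression
residual `r = x_j − σᵀ Σ₋ⱼ⁻¹ x₋ⱼ` equals `e_j` and is independent of `x₋ⱼ`. -/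
theorem lemma2_if_sink {Ω : Type*} [MeasurableSpace Ω]
    (μ : Measure Ω) [IsProbabilityMeasure μ] {d : ℕ}
    (xv : Ω → Fin d → ℝ) (e : Ω → ℝ) (w : Fin d → ℝ)
    (hxvmeas : Measurable xv) (hemeas : Measurable e)
    (hxv2 : ∀ i, MemLp (fun ω => xv ω i) 2 μ) (he2 : MemLp e 2 μ)
    (hxvmean : ∀ i, ∫ ω, xv ω i ∂μ = 0) (hemean : ∫ ω, e ω ∂μ = 0)
    (hindep : IndepFun xv e μ)
    (xj : Ω → ℝ) (hxj : xj = fun ω => (∑ i, w i * xv ω i) + e ω)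
    (σv : Fin d → ℝ) (hσv : σv = fun i => ∫ ω, xv ω i * xj ω ∂μ)
    (Sg : Matrix (Fin d) (Fin d) ℝ)
    (hSg : Sg = Matrix.of fun i k => ∫ ω, xv ω i * xv ω k ∂μ)
    (hSginv : IsUnit Sg.det)
    (r : Ω → ℝ)
    (hr : r = fun ω => xj ω - ∑ i, Matrix.vecMul σv Sg⁻¹ i * xv ω i) :
    r = e ∧ IndepFun xv r μ := by
  -- product of two L2 functions is integrable
  have hmul : ∀ f g : Ω → ℝ, MemLp f 2 μ → MemLp g 2 μ →
      Integrable (fun ω => f ω * g ω) μ := by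
    intro f g hf hg
    have h1 : (1 : ENNReal) / 1 = 1 / 2 + 1 / 2 := by
      rw [ENNReal.add_halves]; simp
    have := hg.smul (r := 1) hf
    rw [memLp_one_iff_integrable] at this
    exact this
  -- independence of each coordinate with e
  have hindep_i : ∀ i, IndepFun (fun ω => xv ω i) e μ := fun i =>
    hindep.comp (measurable_pi_apply i) measurable_id
  have hcross : ∀ i, ∫ ω, xv ω i * e ω ∂μ = 0 := by
    intro i
    have h := (hindep_i i).integral_mul_eq_mul_integral ((hxvmeas.eval).aestronglyMeasurable)
      hemeas.aestronglyMeasurable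
    simpa [Pi.mul_apply, hxvmean i] using h
  have hSgsymm : ∀ i k, Sg i k = Sg k i := by
    intro i k; simp only [hSg, Matrix.of_apply]
    congr 1; ext ω; ring
  -- σv = w ᵥ* Sg
  have hσ : σv = Matrix.vecMul w Sg := by
    funext i
    have hint : ∀ k : Fin d,
        Integrable (fun ω => w k * (xv ω i * xv ω k)) μ :=
      fun k => (hmul _ _ (hxv2 i) (hxv2 k)).const_mul _
    have hsumint : Integrable (fun ω => ∑ k, w k * (xv ω i * xv ω k)) μ :=
      integrable_finset_sum _ fun k _ => hint k
    have heint : Integrable (fun ω => xv ω i * e ω) μ :=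
      hmul _ _ (hxv2 i) he2
    calc σv i = ∫ ω, ((∑ k, w k * (xv ω i * xv ω k)) + xv ω i * e ω) ∂μ := by
          rw [hσv]
          show (∫ ω, xv ω i * xj ω ∂μ) = _
          congr 1; funext ω; rw [hxj, mul_add, Finset.mul_sum]
          congr 1
          exact Finset.sum_congr rfl fun k _ => by ring
      _ = (∑ k, w k * ∫ ω, xv ω i * xv ω k ∂μ) + ∫ ω, xv ω i * e ω ∂μ := by
          rw [integral_add hsumint heint, integral_finset_sum _ fun k _ => hint k]
          simp [integral_const_mul]
      _ = ∑ k, w k * Sg k i := by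
          rw [hcross i, add_zero]
          apply Finset.sum_congr rfl; intro k _
          rw [hSgsymm k i, hSg]; rfl
      _ = Matrix.vecMul w Sg i := by
          simp [Matrix.vecMul, dotProduct]
  have hkey : Matrix.vecMul σv Sg⁻¹ = w := by
    rw [hσ, Matrix.vecMul_vecMul, Matrix.mul_nonsing_inv _ hSginv, Matrix.vecMul_one]
  have hre : r = e := by
    funext ω
    rw [hr, hkey, hxj]
    simp
  exact ⟨hre, hre ▸ hindep⟩
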